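/- Converse direction of Theorem 3: if C : [0, A] → ℝ is convex, strictly increasing, differentiable with C(0) = 0, and there exists a point a₀ ∈ [0, A] with C'(a₀) > b·k, then the payoff P(a) = b·k·a − C(a) satisfies P(a₀') > P(A) for some a₀' < A; hence A is not the argmax and PPS is not OCD-IC. -/
import Mathlib


open Set

/-- converse direction of Theorem 3: if the convex, strictly increasing,
differentiable cost C has C'(a₀) > b·k at some a₀ ∈ [0,A], then some a' < A beats A,
so A is not the argmax of P(a) = b·k·a − C(a) and PPS is not OCD-IC. -/
theorem pps_not_ocdic_converse (b k A : ℝ) (C : ℝ → ℝ)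
    (hb : 0 < b) (hk : 0 < k) (hA : 0 < A)
    (hconv : ConvexOn ℝ (Icc (0:ℝ) A) C)
    (hmono : StrictMonoOn C (Icc (0:ℝ) A))
    (hdiff : ∀ a ∈ Icc (0:ℝ) A, DifferentiableAt ℝ C a)
    (hC0 : C 0 = 0)
    (a₀ : ℝ) (ha₀ : a₀ ∈ Icc (0:ℝ) A) (hbig : b * k < deriv C a₀) :
    ∃ a' ∈ Icc (0:ℝ) A, a' < A ∧ b * k * A - C A < b * k * a' - C a' := by
  rcases eq_or_lt_of_le ha₀.2 with hEq | hlt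
  · -- a₀ = A : use the slope limit from the left at A
    subst hEq
    have hd := (hdiff a₀ ha₀).hasDerivAt
    have hslope := hasDerivAt_iff_tendsto_slope.1 hd
    have hslope' : Filter.Tendsto (slope C a₀) (nhdsWithin a₀ (Iio a₀)) (nhds (deriv C a₀)) :=
      hslope.mono_left (nhdsWithin_mono _ (fun x hx => ne_of_lt hx))
    have h1 : ∀ᶠ x in nhdsWithin a₀ (Iio a₀), b * k < slope C a₀ x :=
      hslope'.eventually (eventually_gt_nhds hbig)
    have h2 : ∀ᶠ x in nhdsWithin a₀ (Iio a₀), 0 < x :=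
      eventually_nhdsWithin_of_eventually_nhds (eventually_gt_nhds hA)
    have h3 : ∀ᶠ x in nhdsWithin a₀ (Iio a₀), x < a₀ := eventually_mem_nhdsWithin.mono (fun x hx => hx)
    obtain ⟨x, hx1, hx2, hx3⟩ := (h1.and (h2.and h3)).exists
    refine ⟨x, ⟨hx2.le, hx3.le⟩, hx3, ?_⟩
    rw [slope_def_field, lt_div_iff_of_neg (by linarith : x - a₀ < 0)] at hx1
    nlinarith
  · -- a₀ < A : slope from the right at a₀, then convexity
    have hd := (hdiff a₀ ha₀).hasDerivAt
    have hslope := hasDerivAt_iff_tendsto_slope.1 hd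
    have hslope' : Filter.Tendsto (slope C a₀) (nhdsWithin a₀ (Ioi a₀)) (nhds (deriv C a₀)) :=
      hslope.mono_left (nhdsWithin_mono _ (fun x hx => ne_of_gt hx))
    have h1 : ∀ᶠ x in nhdsWithin a₀ (Ioi a₀), b * k < slope C a₀ x :=
      hslope'.eventually (eventually_gt_nhds hbig)
    have h2 : ∀ᶠ x in nhdsWithin a₀ (Ioi a₀), x < A :=
      eventually_nhdsWithin_of_eventually_nhds (eventually_lt_nhds hlt)
    have h3 : ∀ᶠ x in nhdsWithin a₀ (Ioi a₀), a₀ < x := eventually_mem_nhdsWithin.mono (fun x hx => hx)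
    obtain ⟨x, hx1, hx2, hx3⟩ := (h1.and (h2.and h3)).exists
    have hxmem : x ∈ Icc (0:ℝ) A := ⟨le_trans ha₀.1 hx3.le, hx2.le⟩
    refine ⟨x, hxmem, hx2, ?_⟩
    have hmonoA : (C x - C a₀) / (x - a₀) ≤ (C A - C x) / (A - x) :=
      hconv.slope_mono_adjacent ha₀ (by exact ⟨hA.le, le_refl A⟩) hx3 hx2
    rw [slope_def_field] at hx1
    have : b * k < (C A - C x) / (A - x) := lt_of_lt_of_le hx1 hmonoA
    rw [lt_div_iff₀ (by linarith : (0:ℝ) < A - x)] at this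
    nlinarith
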